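/- There exist constants C>0 and δ>0 such that the following holds for every n, every sequence d=(d_1,…,d_n) of nonnegative integers with M=∑d_i even, every partition [n]=L∪R with M_1(R)≥M_1(L), and d_max^4≤δ·M: if I denotes the number of double loops of a uniformly random restricted pairing in M(L,R,d), then E[I] ≤ C·d_max³/M. -/

import Mathlib

open Finset

namespace RandomBGraph

/-- The type of points: bucket `i` contains `d i` labelled points. -/
abbrev Pt (n : ℕ) (d : Fin n → ℕ) := Σ i : Fin n, Fin (d i)

/-- Restricted pairings: perfect matchings (fixed-point-free involutions) of the points
in which no pair has both of its points in buckets belonging to `L`. -/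
def restricted (n : ℕ) (d : Fin n → ℕ) (L : Finset (Fin n)) :
    Finset (Pt n d → Pt n d) :=
  Finset.univ.filter (fun f =>
    (∀ p, f (f p) = p) ∧ (∀ p, f p ≠ p) ∧ (∀ p : Pt n d, p.1 ∈ L → (f p).1 ∉ L))

variable {n : ℕ} {d : Fin n → ℕ}

/-- number of double loops (each double loop has 8 labelled representatives) -/
def numDoubleLoops (f : Pt n d → Pt n d) : ℕ :=
  (Finset.univ.filter (fun pq : Pt n d × Pt n d =>
    pq.1 ≠ pq.2 ∧ pq.2 ≠ f pq.1 ∧ pq.1.1 = pq.2.1 ∧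
    (f pq.1).1 = pq.1.1 ∧ (f pq.2).1 = pq.2.1)).card / 8

/-- expectation with respect to the uniform distribution on a finite set -/
noncomputable def expec {α : Type*} (s : Finset α) (X : α → ℕ) : ℝ :=
  (∑ f ∈ s, (X f : ℝ)) / s.card

def M (n : ℕ) (d : Fin n → ℕ) : ℕ := ∑ i, d i

def M1 (d : Fin n → ℕ) (S : Finset (Fin n)) : ℕ := ∑ i ∈ S, d i

def dmax (d : Fin n → ℕ) : ℕ := Finset.univ.sup d


section Aux

lemma mem_restricted {L : Finset (Fin n)} {f : Pt n d → Pt n d} :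
    f ∈ restricted n d L ↔
      (∀ p, f (f p) = p) ∧ (∀ p, f p ≠ p) ∧ (∀ p : Pt n d, p.1 ∈ L → (f p).1 ∉ L) := by
  simp [restricted]

lemma card_univ_pt : Fintype.card (Pt n d) = M n d := by simp [Pt, M]

lemma card_bucket (i : Fin n) :
    (univ.filter fun p : Pt n d => p.1 = i).card = d i := by
  rw [Finset.card_filter, ← Finset.univ_sigma_univ, Finset.sum_sigma]
  simp [apply_ite Finset.card, Finset.sum_ite_eq]

lemma single_switch {L : Finset (Fin n)} {f : Pt n d → Pt n d} (hf : f ∈ restricted n d L)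
    {a b x : Pt n d} (hab : f a = b) (haL : a.1 ∉ L) (hbL : b.1 ∉ L)
    (hxa : x ≠ a) (hxb : x ≠ b) :
    (fun z => Equiv.swap b x (f (Equiv.swap b x z))) ∈ restricted n d L := by
  obtain ⟨h1, h2, h3⟩ := mem_restricted.mp hf
  have hba : f b = a := by rw [← hab, h1]
  refine mem_restricted.mpr ⟨?_, ?_, ?_⟩
  · intro p; simp [Equiv.swap_apply_self, h1]
  · intro p hp
    apply h2 (Equiv.swap b x p)
    have := congrArg (Equiv.swap b x) hp
    simpa [Equiv.swap_apply_self] using this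
  · intro p hpL
    have hanb : a ≠ b := by rintro rfl; exact h2 a hab
    have hpb : p ≠ b := fun h => hbL (h ▸ hpL)
    by_cases hpx : p = x
    · subst hpx
      rw [Equiv.swap_apply_right, hba,
        Equiv.swap_apply_of_ne_of_ne hanb (Ne.symm hxa)]
      exact haL
    · rw [Equiv.swap_apply_of_ne_of_ne hpb hpx]
      have hw : (f p).1 ∉ L := h3 p hpL
      by_cases hwb : f p = b
      · exfalso
        have : p = a := by rw [← hba, ← hwb, h1]
        exact haL (this ▸ hpL)
      · by_cases hwx : f p = x
        · rw [hwx, Equiv.swap_apply_right]; exact hbL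
        · rw [Equiv.swap_apply_of_ne_of_ne hwb hwx]; exact hw

lemma switch_count (L : Finset (Fin n)) (a b c e : Pt n d)
    (hab : a ≠ b) (hac : a ≠ c) (hae : a ≠ e) (hbc : b ≠ c) (hbe : b ≠ e) (hce : c ≠ e)
    (hb1 : b.1 = a.1) (hc1 : c.1 = a.1) (he1 : e.1 = a.1) :
    ((restricted n d L).filter fun f => f a = b ∧ f c = e).card *
      ((M n d - 4) * (M n d - 6)) ≤ (restricted n d L).card := by
  classical
  set F := (restricted n d L).filter fun f => f a = b ∧ f c = e with hF
  rcases F.eq_empty_or_nonempty with h | ⟨f₀, hf₀⟩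
  · simp [h]
  have haL : a.1 ∉ L := by
    obtain ⟨hf₀r, hfa, -⟩ := Finset.mem_filter.mp hf₀
    intro hmem
    have := (mem_restricted.mp hf₀r).2.2 a hmem
    rw [hfa, hb1] at this; exact this hmem
  set s4 : Finset (Pt n d) := {a, b, c, e} with hs4
  have hs4card : s4.card = 4 := by
    rw [hs4]
    rw [Finset.card_insert_of_notMem (by simp [hab, hac, hae]),
      Finset.card_insert_of_notMem (by simp [hbc, hbe]),
      Finset.card_insert_of_notMem (by simp [hce]), Finset.card_singleton]
  -- basic facts about f ∈ F
  have hFfact : ∀ f ∈ F, f ∈ restricted n d L ∧ f a = b ∧ f b = a ∧ f c = e ∧ f e = c := by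
    intro f hf
    obtain ⟨hfr, hfa, hfc⟩ := Finset.mem_filter.mp hf
    obtain ⟨h1, -, -⟩ := mem_restricted.mp hfr
    exact ⟨hfr, hfa, by rw [← hfa, h1], hfc, by rw [← hfc, h1]⟩
  have hfx4 : ∀ f ∈ F, ∀ x : Pt n d, x ∉ s4 → f x ∉ s4 := by
    intro f hf x hx hmem
    obtain ⟨hfr, hfa, hfb, hfc, hfe⟩ := hFfact f hf
    obtain ⟨h1, -, -⟩ := mem_restricted.mp hfr
    apply hx
    simp only [hs4, Finset.mem_insert, Finset.mem_singleton] at hmem ⊢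
    rcases hmem with h' | h' | h' | h'
    · right; left; rw [← h1 x, h', hfa]
    · left; rw [← h1 x, h', hfb]
    · right; right; right; rw [← h1 x, h', hfc]
    · right; right; left; rw [← h1 x, h', hfe]
  -- the sigma set of triples
  set T : Finset (Σ _ : Pt n d → Pt n d, Σ _ : Pt n d, Pt n d) :=
    F.sigma (fun f => (univ \ s4).sigma
      (fun x => univ \ insert x (insert (f x) s4))) with hT
  have hTcard : T.card = F.card * ((M n d - 4) * (M n d - 6)) := by
    rw [hT, Finset.card_sigma]
    have h4 : (univ \ s4).card = M n d - 4 := by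
      rw [Finset.card_sdiff_of_subset (Finset.subset_univ _), Finset.card_univ, card_univ_pt, hs4card]
    have : ∀ f ∈ F, ((univ \ s4).sigma
        (fun x => univ \ insert x (insert (f x) s4))).card = (M n d - 4) * (M n d - 6) := by
      intro f hf
      rw [Finset.card_sigma]
      have : ∀ x ∈ univ \ s4, (univ \ insert x (insert (f x) s4)).card = M n d - 6 := by
        intro x hx
        have hxs4 : x ∉ s4 := (Finset.mem_sdiff.mp hx).2
        have hfxs4 : f x ∉ s4 := hfx4 f hf x hxs4
        have hfxx : f x ≠ x := by
          obtain ⟨hfr, -⟩ := hFfact f hf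
          exact (mem_restricted.mp hfr).2.1 x
        rw [Finset.card_sdiff_of_subset (Finset.subset_univ _), Finset.card_univ, card_univ_pt]
        rw [Finset.card_insert_of_notMem (by simp [hfxx.symm, hxs4] : x ∉ _),
          Finset.card_insert_of_notMem hfxs4, hs4card]
      rw [Finset.sum_congr rfl this, Finset.sum_const, h4, smul_eq_mul]
    rw [Finset.sum_congr rfl this, Finset.sum_const, smul_eq_mul]
  rw [← hTcard]
  have hmemT : ∀ t ∈ T, t.1 ∈ F ∧ t.2.1 ∉ s4 ∧
      t.2.2 ∉ insert t.2.1 (insert (t.1 t.2.1) s4) := by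
    intro t ht
    rw [hT] at ht
    obtain ⟨h₁, h₂⟩ := Finset.mem_sigma.mp ht
    obtain ⟨h₃, h₄⟩ := Finset.mem_sigma.mp h₂
    exact ⟨h₁, (Finset.mem_sdiff.mp h₃).2, (Finset.mem_sdiff.mp h₄).2⟩
  set Φ : (Σ _ : Pt n d → Pt n d, Σ _ : Pt n d, Pt n d) → (Pt n d → Pt n d) :=
    fun t => fun z => Equiv.swap e t.2.2 (Equiv.swap b t.2.1
      (t.1 (Equiv.swap b t.2.1 (Equiv.swap e t.2.2 z)))) with hΦ
  have hbL : b.1 ∉ L := by rw [hb1]; exact haL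
  have hcL : c.1 ∉ L := by rw [hc1]; exact haL
  have heL : e.1 ∉ L := by rw [he1]; exact haL
  -- unpack the conditions for a triple in T
  have hfacts : ∀ t ∈ T, t.2.1 ≠ a ∧ t.2.1 ≠ b ∧ t.2.1 ≠ c ∧ t.2.1 ≠ e ∧
      t.2.2 ≠ a ∧ t.2.2 ≠ b ∧ t.2.2 ≠ c ∧ t.2.2 ≠ e ∧
      t.2.2 ≠ t.2.1 ∧ t.2.2 ≠ t.1 t.2.1 := by
    intro t ht
    obtain ⟨-, hx, hy⟩ := hmemT t ht
    simp only [hs4, Finset.mem_insert, Finset.mem_singleton, not_or] at hx hy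
    exact ⟨hx.1, hx.2.1, hx.2.2.1, hx.2.2.2, hy.2.2.1, hy.2.2.2.1,
      hy.2.2.2.2.1, hy.2.2.2.2.2, hy.1, hy.2.1⟩
  have hmem : ∀ t ∈ T, Φ t ∈ restricted n d L := by
    rintro ⟨f, x, y⟩ ht
    obtain ⟨hfF, -, -⟩ := hmemT _ ht
    obtain ⟨hxa, hxb, hxc, hxe, hya, hyb, hyc, hye, hyx, hyfx⟩ := hfacts _ ht
    obtain ⟨hfr, hfa, hfb, hfc, hfe⟩ := hFfact f hfF
    have step1 : (fun z => Equiv.swap b x (f (Equiv.swap b x z))) ∈ restricted n d L :=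
      single_switch hfr hfa haL hbL hxa hxb
    have hgc : (fun z => Equiv.swap b x (f (Equiv.swap b x z))) c = e := by
      simp only
      rw [Equiv.swap_apply_of_ne_of_ne (Ne.symm hbc) (Ne.symm hxc), hfc,
        Equiv.swap_apply_of_ne_of_ne (Ne.symm hbe) (Ne.symm hxe)]
    exact single_switch step1 hgc hcL heL hyc hye
  have keyx : ∀ t ∈ T, Φ t a = t.2.1 := by
    rintro ⟨f, x, y⟩ ht
    obtain ⟨hfF, -, -⟩ := hmemT _ ht
    obtain ⟨hxa, hxb, hxc, hxe, hya, hyb, hyc, hye, hyx, hyfx⟩ := hfacts _ ht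
    obtain ⟨hfr, hfa, hfb, hfc, hfe⟩ := hFfact f hfF
    simp only [hΦ]
    rw [Equiv.swap_apply_of_ne_of_ne hae (Ne.symm hya),
      Equiv.swap_apply_of_ne_of_ne hab (Ne.symm hxa), hfa,
      Equiv.swap_apply_left,
      Equiv.swap_apply_of_ne_of_ne hxe (Ne.symm hyx)]
  have keyy : ∀ t ∈ T, Φ t c = t.2.2 := by
    rintro ⟨f, x, y⟩ ht
    obtain ⟨hfF, -, -⟩ := hmemT _ ht
    obtain ⟨hxa, hxb, hxc, hxe, hya, hyb, hyc, hye, hyx, hyfx⟩ := hfacts _ ht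
    obtain ⟨hfr, hfa, hfb, hfc, hfe⟩ := hFfact f hfF
    simp only [hΦ]
    rw [Equiv.swap_apply_of_ne_of_ne hce (Ne.symm hyc),
      Equiv.swap_apply_of_ne_of_ne (Ne.symm hbc) (Ne.symm hxc), hfc,
      Equiv.swap_apply_of_ne_of_ne (Ne.symm hbe) (Ne.symm hxe),
      Equiv.swap_apply_left]
  have keyf : ∀ t ∈ T, ∀ z, t.1 z = Equiv.swap b t.2.1 (Equiv.swap e t.2.2
      (Φ t (Equiv.swap e t.2.2 (Equiv.swap b t.2.1 z)))) := by
    rintro ⟨f, x, y⟩ ht z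
    simp [hΦ, Equiv.swap_apply_self]
  apply Finset.card_le_card_of_injOn Φ hmem
  rintro t1 ht1 t2 ht2 hEq
  have hx12 : t1.2.1 = t2.2.1 := by
    rw [← keyx t1 ht1, ← keyx t2 ht2, hEq]
  have hy12 : t1.2.2 = t2.2.2 := by
    rw [← keyy t1 ht1, ← keyy t2 ht2, hEq]
  have hf12 : t1.1 = t2.1 := by
    funext z
    rw [keyf t1 ht1 z, keyf t2 ht2 z, hEq, hx12, hy12]
  obtain ⟨f1, x1, y1⟩ := t1
  obtain ⟨f2, x2, y2⟩ := t2
  simp only at hx12 hy12 hf12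
  subst hx12; subst hy12; subst hf12
  rfl

/-- the tuple predicate -/
def goodTuple (t : Pt n d × Pt n d × Pt n d × Pt n d) : Prop :=
  t.1 ≠ t.2.1 ∧ t.1 ≠ t.2.2.1 ∧ t.1 ≠ t.2.2.2 ∧ t.2.1 ≠ t.2.2.1 ∧ t.2.1 ≠ t.2.2.2 ∧
  t.2.2.1 ≠ t.2.2.2 ∧ t.2.1.1 = t.1.1 ∧ t.2.2.1.1 = t.1.1 ∧ t.2.2.2.1 = t.1.1

instance : DecidablePred (goodTuple (n := n) (d := d)) := fun t => by
  unfold goodTuple; infer_instance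

lemma claim1 {L : Finset (Fin n)} {f : Pt n d → Pt n d} (hf : f ∈ restricted n d L) :
    numDoubleLoops f ≤ ((univ.filter (goodTuple (n := n) (d := d))).filter
      (fun t => f t.1 = t.2.1 ∧ f t.2.2.1 = t.2.2.2)).card := by
  obtain ⟨h1, h2, h3⟩ := mem_restricted.mp hf
  refine le_trans (Nat.div_le_self _ 8) ?_
  apply Finset.card_le_card_of_injOn (fun pq => (pq.1, f pq.1, pq.2, f pq.2))
  · rintro ⟨p, q⟩ hpq
    simp only [Finset.mem_coe, Finset.mem_filter, Finset.mem_univ, true_and, goodTuple] at hpq ⊢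
    obtain ⟨hne, hnfp, hbk, hl1, hl2⟩ := hpq
    refine ⟨⟨(h2 p).symm, hne, ?_, fun h => hnfp h.symm, ?_, (h2 q).symm,
      hl1, hbk.symm, hl2.trans hbk.symm⟩, trivial⟩
    · intro h; exact hnfp (by rw [h, h1])
    · intro h; exact hne (by rw [← h1 p, h, h1])
  · rintro ⟨p, q⟩ - ⟨p', q'⟩ - hEq
    simp only [Prod.mk.injEq] at hEq
    exact Prod.ext hEq.1 hEq.2.2.1

lemma cardD_le : (univ.filter (goodTuple (n := n) (d := d))).card ≤ M n d * dmax d ^ 3 := by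
  classical
  have hsub : (univ.filter (goodTuple (n := n) (d := d))) ⊆
      univ.filter (fun t : Pt n d × Pt n d × Pt n d × Pt n d =>
        t.2.1.1 = t.1.1 ∧ t.2.2.1.1 = t.1.1 ∧ t.2.2.2.1 = t.1.1) := by
    intro t ht
    simp only [Finset.mem_filter, Finset.mem_univ, true_and, goodTuple] at ht ⊢
    exact ⟨ht.2.2.2.2.2.2.1, ht.2.2.2.2.2.2.2.1, ht.2.2.2.2.2.2.2.2⟩
  refine le_trans (Finset.card_le_card hsub) ?_
  have hcard : (univ.filter (fun t : Pt n d × Pt n d × Pt n d × Pt n d =>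
      t.2.1.1 = t.1.1 ∧ t.2.2.1.1 = t.1.1 ∧ t.2.2.2.1 = t.1.1)).card
      = ∑ a : Pt n d, d a.1 ^ 3 := by
    rw [Finset.card_eq_sum_card_fiberwise
      (f := fun t : Pt n d × Pt n d × Pt n d × Pt n d => t.1) (t := univ)
      (fun t _ => Finset.mem_univ t.1)]
    refine Finset.sum_congr rfl fun a _ => ?_
    have heq : ((univ.filter (fun t : Pt n d × Pt n d × Pt n d × Pt n d =>
        t.2.1.1 = t.1.1 ∧ t.2.2.1.1 = t.1.1 ∧ t.2.2.2.1 = t.1.1)).filter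
          (fun t => t.1 = a))
        = {a} ×ˢ ((univ.filter fun p : Pt n d => p.1 = a.1) ×ˢ
            ((univ.filter fun p : Pt n d => p.1 = a.1) ×ˢ
              (univ.filter fun p : Pt n d => p.1 = a.1))) := by
      ext ⟨p, q, r, s⟩
      simp only [Finset.mem_filter, Finset.mem_univ, true_and, Finset.mem_product,
        Finset.mem_singleton]
      constructor
      · rintro ⟨⟨h1, h2, h3⟩, rfl⟩; exact ⟨rfl, h1, h2, h3⟩
      · rintro ⟨rfl, h1, h2, h3⟩; exact ⟨⟨h1, h2, h3⟩, rfl⟩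
    rw [heq, Finset.card_product, Finset.card_product, Finset.card_product,
      Finset.card_singleton, card_bucket, one_mul]
    ring
  rw [hcard]
  calc ∑ a : Pt n d, d a.1 ^ 3 ≤ ∑ _a : Pt n d, dmax d ^ 3 :=
        Finset.sum_le_sum (fun a _ => Nat.pow_le_pow_left (Finset.le_sup (Finset.mem_univ _)) 3)
    _ = M n d * dmax d ^ 3 := by
        rw [Finset.sum_const, smul_eq_mul, Finset.card_univ, card_univ_pt]

lemma master (L : Finset (Fin n)) :
    (∑ f ∈ restricted n d L, numDoubleLoops f) * ((M n d - 4) * (M n d - 6))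
      ≤ M n d * dmax d ^ 3 * (restricted n d L).card := by
  classical
  set D := univ.filter (goodTuple (n := n) (d := d)) with hD
  have step1 : (∑ f ∈ restricted n d L, numDoubleLoops f)
      ≤ ∑ f ∈ restricted n d L,
          (D.filter (fun t => f t.1 = t.2.1 ∧ f t.2.2.1 = t.2.2.2)).card :=
    Finset.sum_le_sum (fun f hf => claim1 hf)
  have step2 : ∑ f ∈ restricted n d L,
        (D.filter fun t => f t.1 = t.2.1 ∧ f t.2.2.1 = t.2.2.2).card
      = ∑ t ∈ D, ((restricted n d L).filter
          fun f => f t.1 = t.2.1 ∧ f t.2.2.1 = t.2.2.2).card := by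
    simp only [Finset.card_filter]
    rw [Finset.sum_comm]
  have step3 : ∀ t ∈ D, ((restricted n d L).filter
      fun f => f t.1 = t.2.1 ∧ f t.2.2.1 = t.2.2.2).card *
        ((M n d - 4) * (M n d - 6)) ≤ (restricted n d L).card := by
    intro t ht
    rw [hD, Finset.mem_filter] at ht
    obtain ⟨-, h1, h2, h3, h4, h5, h6, h7, h8, h9⟩ := ht
    exact switch_count L t.1 t.2.1 t.2.2.1 t.2.2.2 h1 h2 h3 h4 h5 h6 h7 h8 h9
  calc (∑ f ∈ restricted n d L, numDoubleLoops f) * ((M n d - 4) * (M n d - 6))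
      ≤ (∑ t ∈ D, ((restricted n d L).filter
          fun f => f t.1 = t.2.1 ∧ f t.2.2.1 = t.2.2.2).card) *
            ((M n d - 4) * (M n d - 6)) :=
        Nat.mul_le_mul_right _ (step2 ▸ step1)
    _ = ∑ t ∈ D, ((restricted n d L).filter
          fun f => f t.1 = t.2.1 ∧ f t.2.2.1 = t.2.2.2).card *
            ((M n d - 4) * (M n d - 6)) := Finset.sum_mul _ _ _
    _ ≤ ∑ _t ∈ D, (restricted n d L).card := Finset.sum_le_sum step3
    _ = D.card * (restricted n d L).card := by rw [Finset.sum_const, smul_eq_mul]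
    _ ≤ M n d * dmax d ^ 3 * (restricted n d L).card :=
        Nat.mul_le_mul_right _ cardD_le

lemma dmax_ge_four {L : Finset (Fin n)} {f : Pt n d → Pt n d} (hf : f ∈ restricted n d L)
    (hne : numDoubleLoops f ≠ 0) : 4 ≤ dmax d := by
  obtain ⟨h1, h2, h3⟩ := mem_restricted.mp hf
  have hpos : 0 < (Finset.univ.filter (fun pq : Pt n d × Pt n d =>
      pq.1 ≠ pq.2 ∧ pq.2 ≠ f pq.1 ∧ pq.1.1 = pq.2.1 ∧
      (f pq.1).1 = pq.1.1 ∧ (f pq.2).1 = pq.2.1)).card := by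
    by_contra h
    apply hne
    unfold numDoubleLoops
    omega
  obtain ⟨⟨p, q⟩, hpq⟩ := Finset.card_pos.mp hpos
  simp only [Finset.mem_filter, Finset.mem_univ, true_and] at hpq
  obtain ⟨hne', hnfp, hbk, hl1, hl2⟩ := hpq
  have hsub : ({p, f p, q, f q} : Finset (Pt n d)) ⊆
      univ.filter (fun z : Pt n d => z.1 = p.1) := by
    intro z hz
    simp only [Finset.mem_insert, Finset.mem_singleton] at hz
    simp only [Finset.mem_filter, Finset.mem_univ, true_and]
    rcases hz with rfl | rfl | rfl | rfl
    · rfl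
    · exact hl1
    · exact hbk.symm
    · exact hl2.trans hbk.symm
  have hpfq : p ≠ f q := fun h => hnfp (by rw [h, h1])
  have hfpfq : f p ≠ f q := fun h => hne' (by rw [← h1 p, h, h1])
  have hcard : ({p, f p, q, f q} : Finset (Pt n d)).card = 4 := by
    rw [Finset.card_insert_of_notMem (by
        simp only [Finset.mem_insert, Finset.mem_singleton, not_or]
        exact ⟨(h2 p).symm, hne', hpfq⟩),
      Finset.card_insert_of_notMem (by
        simp only [Finset.mem_insert, Finset.mem_singleton, not_or]
        exact ⟨fun h => hnfp h.symm, hfpfq⟩),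
      Finset.card_insert_of_notMem (by
        simp only [Finset.mem_singleton]
        exact (h2 q).symm),
      Finset.card_singleton]
  calc 4 = ({p, f p, q, f q} : Finset (Pt n d)).card := hcard.symm
    _ ≤ (univ.filter (fun z : Pt n d => z.1 = p.1)).card := Finset.card_le_card hsub
    _ = d p.1 := card_bucket p.1
    _ ≤ dmax d := Finset.le_sup (Finset.mem_univ _)

end Aux

/-- **Lemma 2**: `E[I] = O(d_max³/M)`. -/
theorem expected_double_loops :
    ∃ C : ℝ, 0 < C ∧ ∃ δ : ℝ, 0 < δ ∧
      ∀ (n : ℕ) (d : Fin n → ℕ) (L R : Finset (Fin n)),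
        Disjoint L R → L ∪ R = Finset.univ →
        Even (M n d) →
        M1 d L ≤ M1 d R →
        (dmax d : ℝ) ^ 4 ≤ δ * (M n d : ℝ) →
        expec (restricted n d L) numDoubleLoops ≤ C * (dmax d : ℝ) ^ 3 / (M n d : ℝ) :=  by
  refine ⟨2, by norm_num, 1, by norm_num, ?_⟩
  intro n d L R _ _ _ _ hδ
  rw [one_mul] at hδ
  by_cases hS : ∑ f ∈ restricted n d L, numDoubleLoops f = 0
  · have hz : expec (restricted n d L) numDoubleLoops = 0 := by
      rw [expec]
      have : ∑ f ∈ restricted n d L, ((numDoubleLoops f : ℕ) : ℝ)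
          = ((∑ f ∈ restricted n d L, numDoubleLoops f : ℕ) : ℝ) := by push_cast; rfl
      rw [this, hS]
      simp
    rw [hz]
    positivity
  · obtain ⟨f, hf, hfne⟩ := Finset.exists_ne_zero_of_sum_ne_zero hS
    have hdm4 : 4 ≤ dmax d := dmax_ge_four hf hfne
    have hM256 : (256 : ℝ) ≤ (M n d : ℝ) := by
      calc (256 : ℝ) = 4 ^ 4 := by norm_num
        _ ≤ (dmax d : ℝ) ^ 4 := by
            have h4 : (4 : ℝ) ≤ (dmax d : ℝ) := by exact_mod_cast hdm4
            exact pow_le_pow_left₀ (by norm_num) h4 4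
        _ ≤ (M n d : ℝ) := hδ
    have hMnat : 256 ≤ M n d := by exact_mod_cast hM256
    have hN : 0 < (restricted n d L).card := Finset.card_pos.mpr ⟨f, hf⟩
    -- the quadratic bound in ℕ
    have hquad : M n d * M n d ≤ 2 * ((M n d - 4) * (M n d - 6)) := by
      obtain ⟨k, hk⟩ := Nat.exists_eq_add_of_le hMnat
      rw [hk]
      have h4 : 256 + k - 4 = 252 + k := by omega
      have h6 : 256 + k - 6 = 250 + k := by omega
      rw [h4, h6]
      nlinarith
    set S := ∑ f ∈ restricted n d L, numDoubleLoops f with hSdef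
    have key : S * M n d * M n d ≤ 2 * dmax d ^ 3 * (restricted n d L).card * M n d := by
      calc S * M n d * M n d = S * (M n d * M n d) := by ring
        _ ≤ S * (2 * ((M n d - 4) * (M n d - 6))) := Nat.mul_le_mul_left _ hquad
        _ = 2 * (S * ((M n d - 4) * (M n d - 6))) := by ring
        _ ≤ 2 * (M n d * dmax d ^ 3 * (restricted n d L).card) :=
            Nat.mul_le_mul_left _ (master L)
        _ = 2 * dmax d ^ 3 * (restricted n d L).card * M n d := by ring
    have keyN : S * M n d ≤ 2 * dmax d ^ 3 * (restricted n d L).card :=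
      Nat.le_of_mul_le_mul_right key (by omega)
    have hMpos : (0 : ℝ) < (M n d : ℝ) := by linarith
    have hNpos : (0 : ℝ) < ((restricted n d L).card : ℝ) := by exact_mod_cast hN
    rw [expec]
    have hcast : ∑ f ∈ restricted n d L, ((numDoubleLoops f : ℕ) : ℝ) = (S : ℝ) := by
      rw [hSdef]; push_cast; rfl
    rw [hcast, div_le_div_iff₀ hNpos hMpos]
    calc (S : ℝ) * (M n d : ℝ) = ((S * M n d : ℕ) : ℝ) := by push_cast; ring
      _ ≤ ((2 * dmax d ^ 3 * (restricted n d L).card : ℕ) : ℝ) := by exact_mod_cast keyN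
      _ = 2 * (dmax d : ℝ) ^ 3 * ((restricted n d L).card : ℝ) := by push_cast; ring


end RandomBGraph
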